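/- For every integer T ≥ 1, the MILE iterates satisfy ∑_{t=1}^{T} ( ‖∇f(X̄(t))‖² + (1 − Lα)·‖∇̄f(X(t))‖² ) ≤ (2/α)·(f(X̄(1)) − f(x*)) + (L²/N)·∑_{t=1}^{T} ∑_{i=1}^{N} ‖X̄(t) − x_i(t)‖². -/

import Mathlib

open Finset

variable {E : Type*} [NormedAddCommGroup E] [InnerProductSpace ℝ E] [CompleteSpace E]

-- descent lemma
theorem mile_descent_aux {g : E → ℝ} {L : ℝ} (hL : 0 ≤ L)
    (hg : Differentiable ℝ g) (hLip : LipschitzWith L.toNNReal (gradient g))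
    (x y : E) :
    g y ≤ g x + inner ℝ (gradient g x) (y - x) + L / 2 * ‖y - x‖ ^ 2 := by
  set v := y - x with hv
  have hgrad : ∀ p : E, HasFDerivAt g ((InnerProductSpace.toDual ℝ E) (gradient g p)) p := by
    intro p
    exact ((hg p).hasGradientAt).hasFDerivAt
  have hline : ∀ s : ℝ, HasDerivAt (fun s : ℝ => x + s • v) v s := by
    intro s
    simpa using ((hasDerivAt_id s).smul_const v).const_add x
  have hφ : ∀ s : ℝ, HasDerivAt (fun s : ℝ => g (x + s • v))
      (inner ℝ (gradient g (x + s • v)) v) s := by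
    intro s
    have := (hgrad (x + s • v)).comp_hasDerivAt s (hline s)
    exact this
  set ψ : ℝ → ℝ := fun s => g (x + s • v) - s * inner ℝ (gradient g x) v - L * s ^ 2 / 2 * ‖v‖ ^ 2
    with hψ
  have hψ' : ∀ s : ℝ, HasDerivAt ψ
      ((inner ℝ (gradient g (x + s • v)) v : ℝ) - inner ℝ (gradient g x) v - L * s * ‖v‖ ^ 2) s := by
    intro s
    have h1 := hφ s
    have h2 : HasDerivAt (fun s : ℝ => s * (inner ℝ (gradient g x) v : ℝ))
        (inner ℝ (gradient g x) v) s := by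
      simpa using (hasDerivAt_id s).mul_const (inner ℝ (gradient g x) v : ℝ)
    have h3 : HasDerivAt (fun s : ℝ => L * s ^ 2 / 2 * ‖v‖ ^ 2) (L * s * ‖v‖ ^ 2) s := by
      have : HasDerivAt (fun s : ℝ => s ^ 2) (2 * s) s := by
        simpa using hasDerivAt_pow 2 s
      have := ((this.const_mul L).div_const 2).mul_const (‖v‖ ^ 2)
      exact this.congr_deriv (by ring)
    exact (h1.sub h2).sub h3
  have hnonpos : ∀ s ∈ Set.Ioo (0:ℝ) 1,
      ((inner ℝ (gradient g (x + s • v)) v : ℝ) - inner ℝ (gradient g x) v - L * s * ‖v‖ ^ 2) ≤ 0 := by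
    intro s hs
    have hdiff : (inner ℝ (gradient g (x + s • v)) v : ℝ) - inner ℝ (gradient g x) v
        = inner ℝ (gradient g (x + s • v) - gradient g x) v := by
      rw [inner_sub_left]
    rw [hdiff]
    have hcs : (inner ℝ (gradient g (x + s • v) - gradient g x) v : ℝ)
        ≤ ‖gradient g (x + s • v) - gradient g x‖ * ‖v‖ := real_inner_le_norm _ _
    have hlip : ‖gradient g (x + s • v) - gradient g x‖ ≤ L * (s * ‖v‖) := by
      have h0 := hLip.dist_le_mul (x + s • v) x
      rw [dist_eq_norm, dist_eq_norm] at h0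
      simp only [add_sub_cancel_left] at h0
      calc ‖gradient g (x + s • v) - gradient g x‖ ≤ L.toNNReal * ‖s • v‖ := h0
        _ = L * (s * ‖v‖) := by
            rw [norm_smul, Real.norm_eq_abs, abs_of_pos hs.1, Real.coe_toNNReal _ hL]
    nlinarith [norm_nonneg v, hs.1.le, mul_nonneg (mul_nonneg hL hs.1.le) (norm_nonneg v)]
  have hmono : ∀ s ∈ Set.Icc (0:ℝ) 1, ∀ u ∈ Set.Icc (0:ℝ) 1, s ≤ u → ψ u ≤ ψ s := by
    have := antitoneOn_of_deriv_nonpos (convex_Icc (0:ℝ) 1)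
      (Continuous.continuousOn (by
        have : Differentiable ℝ ψ := fun s => (hψ' s).differentiableAt
        exact this.continuous))
      (fun s _ => (hψ' s).differentiableAt.differentiableWithinAt)
      (by
        intro s hs
        rw [interior_Icc] at hs
        rw [(hψ' s).deriv]
        exact hnonpos s hs)
    exact fun s hs u hu hsu => this hs hu hsu
  have h10 : ψ 1 ≤ ψ 0 := hmono 0 (by norm_num) 1 (by norm_num) (by norm_num)
  have h1 : x + (1:ℝ) • v = y := by simp [hv]
  have h0 : x + (0:ℝ) • v = x := by simp
  simp only [hψ, h1, h0, one_mul, one_pow, zero_mul, mul_zero, zero_pow, sub_zero,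
    mul_one] at h10
  nlinarith [h10]

theorem grad_avg {n N : ℕ} (f : Fin N → EuclideanSpace ℝ (Fin n) → ℝ)
    (hdiff : ∀ i, Differentiable ℝ (f i)) (x : EuclideanSpace ℝ (Fin n)) :
    HasGradientAt (fun x => (1 / (N : ℝ)) * ∑ i, f i x)
      ((1 / (N : ℝ)) • ∑ i, gradient (f i) x) x := by
  have h2 : HasFDerivAt (fun y => ∑ i, f i y)
      (∑ i, (InnerProductSpace.toDual ℝ _) (gradient (f i) x)) x :=
    HasFDerivAt.fun_sum (fun i _ => ((hdiff i x).hasGradientAt).hasFDerivAt)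
  have h3 := h2.const_mul (1/(N:ℝ))
  have h4 := h3.hasGradientAt
  convert h4 using 1
  simp [map_smul, map_sum]
  rfl

theorem avg_lipschitz {n N : ℕ} (hN : 0 < N) {L : ℝ} (hL : 0 ≤ L)
    (g : Fin N → EuclideanSpace ℝ (Fin n) → EuclideanSpace ℝ (Fin n))
    (hg : ∀ i, LipschitzWith L.toNNReal (g i)) :
    LipschitzWith L.toNNReal (fun x => (1 / (N : ℝ)) • ∑ i, g i x) := by
  rw [lipschitzWith_iff_dist_le_mul]
  intro x y
  replace hg : ∀ i, dist (g i x) (g i y) ≤ L.toNNReal * dist x y :=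
    fun i => (hg i).dist_le_mul x y
  have hNpos : (0:ℝ) < N := Nat.cast_pos.mpr hN
  simp only [dist_eq_norm, ← smul_sub, ← Finset.sum_sub_distrib] at hg ⊢
  have h1 : ‖(1 / (N:ℝ)) • ∑ i, (g i x - g i y)‖ = (1/(N:ℝ)) * ‖∑ i, (g i x - g i y)‖ := by
    rw [norm_smul, Real.norm_eq_abs, abs_of_nonneg (by positivity)]
  rw [h1]
  have h2 : ‖∑ i, (g i x - g i y)‖ ≤ ∑ _i : Fin N, (L.toNNReal : ℝ) * ‖x - y‖ :=
    (norm_sum_le _ _).trans (Finset.sum_le_sum (fun i _ => hg i))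
  have h3 : (1/(N:ℝ)) * ‖∑ i, (g i x - g i y)‖ ≤ (1/(N:ℝ)) * (N * ((L.toNNReal:ℝ) * ‖x - y‖)) := by
    have := h2
    rw [Finset.sum_const, Finset.card_univ, Fintype.card_fin, nsmul_eq_mul] at this
    exact mul_le_mul_of_nonneg_left this (by positivity)
  calc (1/(N:ℝ)) * ‖∑ i, (g i x - g i y)‖ ≤ (1/(N:ℝ)) * (N * ((L.toNNReal:ℝ) * ‖x - y‖)) := h3
    _ = (L.toNNReal:ℝ) * ‖x - y‖ := by field_simp

theorem gap_bound {n N : ℕ} (hN : 0 < N) {L : ℝ} (hL : 0 ≤ L)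
    (g : Fin N → EuclideanSpace ℝ (Fin n) → EuclideanSpace ℝ (Fin n))
    (hg : ∀ i, LipschitzWith L.toNNReal (g i))
    (xb : EuclideanSpace ℝ (Fin n)) (x : Fin N → EuclideanSpace ℝ (Fin n)) :
    ‖(1/(N:ℝ)) • ∑ i, (g i xb - g i (x i))‖^2 ≤ L^2/N * ∑ i, ‖xb - x i‖^2 := by
  have hNpos : (0:ℝ) < N := Nat.cast_pos.mpr hN
  have hb : ∀ i, ‖g i xb - g i (x i)‖ ≤ L * ‖xb - x i‖ := by
    intro i
    have := (hg i).dist_le_mul xb (x i)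
    simpa [dist_eq_norm, Real.coe_toNNReal _ hL] using this
  have h1 : ‖(1/(N:ℝ)) • ∑ i, (g i xb - g i (x i))‖ ≤ (1/(N:ℝ)) * ∑ i, L * ‖xb - x i‖ := by
    rw [norm_smul, Real.norm_eq_abs, abs_of_nonneg (by positivity)]
    exact mul_le_mul_of_nonneg_left
      ((norm_sum_le _ _).trans (Finset.sum_le_sum fun i _ => hb i)) (by positivity)
  have h2 : ‖(1/(N:ℝ)) • ∑ i, (g i xb - g i (x i))‖^2 ≤ ((1/(N:ℝ)) * ∑ i, L * ‖xb - x i‖)^2 := by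
    apply sq_le_sq' _ h1
    have : (0:ℝ) ≤ (1/(N:ℝ)) * ∑ i, L * ‖xb - x i‖ := by positivity
    nlinarith [norm_nonneg ((1/(N:ℝ)) • ∑ i, (g i xb - g i (x i)))]
  have h3 : (∑ i, L * ‖xb - x i‖)^2 ≤ N * ∑ i, (L * ‖xb - x i‖)^2 := by
    have := sq_sum_le_card_mul_sum_sq (s := Finset.univ) (f := fun i => L * ‖xb - x i‖)
    simpa using this
  calc ‖(1/(N:ℝ)) • ∑ i, (g i xb - g i (x i))‖^2
      ≤ ((1/(N:ℝ)) * ∑ i, L * ‖xb - x i‖)^2 := h2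
    _ = (1/(N:ℝ))^2 * (∑ i, L * ‖xb - x i‖)^2 := by ring
    _ ≤ (1/(N:ℝ))^2 * (N * ∑ i, (L * ‖xb - x i‖)^2) :=
        mul_le_mul_of_nonneg_left h3 (by positivity)
    _ = L^2/N * ∑ i, ‖xb - x i‖^2 := by
        rw [Finset.mul_sum, Finset.mul_sum, Finset.mul_sum]
        congr 1 with i
        field_simp

theorem avg_swap {n N : ℕ} (M : Matrix (Fin N) (Fin N) ℝ) (hM : ∀ i, ∑ j, M i j = 1)
    (v : Fin N → EuclideanSpace ℝ (Fin n)) :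
    ∑ j, ∑ i, M i j • v i = ∑ i, v i := by
  rw [Finset.sum_comm]
  calc ∑ i, ∑ j, M i j • v i = ∑ i, (∑ j, M i j) • v i := by
        refine Finset.sum_congr rfl fun i _ => ?_
        rw [Finset.sum_smul]
    _ = ∑ i, v i := by
        refine Finset.sum_congr rfl fun i _ => ?_
        rw [hM i, one_smul]


theorem mile_descent_sum_bound
    (n N : ℕ) (hn : 0 < n) (hN : 2 ≤ N)
    (f : Fin N → EuclideanSpace ℝ (Fin n) → ℝ)
    (L : ℝ) (hL : 0 < L)
    (hdiff : ∀ i, Differentiable ℝ (f i))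
    (hsmooth : ∀ i, LipschitzWith L.toNNReal (gradient (f i)))
    (F : EuclideanSpace ℝ (Fin n) → ℝ)
    (hF : F = fun x => (1 / (N : ℝ)) * ∑ i, f i x)
    (xstar : EuclideanSpace ℝ (Fin n))
    (hxstar : ∀ x, F xstar ≤ F x)
    (W : Matrix (Fin N) (Fin N) ℝ)
    (hWsymm : W.IsSymm)
    (hWnull : ∀ v : Fin N → ℝ, ((1 : Matrix (Fin N) (Fin N) ℝ) - W).mulVec v = 0 ↔ ∃ c : ℝ, v = fun _ => c)
    (hWpsd : (2 • (1 : Matrix (Fin N) (Fin N) ℝ) - (W + 1)).PosSemidef)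
    (hWpd : (W + 1).PosDef)
    (τ : ℕ) (hτ : 0 < τ)
    (ξ : ℝ) (hξ0 : 0 < ξ) (hξ1 : ξ < 2 / ((τ : ℝ) + 3))
    (α : ℝ) (hα0 : 0 < α)
    (Wt : ℕ → Matrix (Fin N) (Fin N) ℝ)
    (hWt : Wt = fun t => if τ ∣ t then (1 - ξ) • (1 : Matrix (Fin N) (Fin N) ℝ) + ξ • W else 1)
    (Xm1 : Fin N → EuclideanSpace ℝ (Fin n))
    (X : ℕ → Fin N → EuclideanSpace ℝ (Fin n))
    (hX0 : ∀ i, X 0 i = Xm1 i - α • gradient (f i) (Xm1 i))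
    (hX1 : ∀ j, X 1 j = ∑ i, Wt 0 i j •
        (2 • X 0 i - Xm1 i - α • gradient (f i) (X 0 i) + α • gradient (f i) (Xm1 i)))
    (hXrec : ∀ t : ℕ, ∀ j, X (t + 2) j = ∑ i, Wt (t + 1) i j •
        (2 • X (t + 1) i - X t i - α • gradient (f i) (X (t + 1) i) + α • gradient (f i) (X t i)))
    (Xbar : ℕ → EuclideanSpace ℝ (Fin n))
    (hXbar : Xbar = fun t => (1 / (N : ℝ)) • ∑ i, X t i)
    (gbar : ℕ → EuclideanSpace ℝ (Fin n))
    (hgbar : gbar = fun t => (1 / (N : ℝ)) • ∑ i, gradient (f i) (X t i))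
    (T : ℕ) (hT : 1 ≤ T) :
    ∑ t ∈ Finset.Icc 1 T, (‖gradient F (Xbar t)‖ ^ 2 + (1 - L * α) * ‖gbar t‖ ^ 2) ≤
      2 / α * (F (Xbar 1) - F xstar)
      + L ^ 2 / N * ∑ t ∈ Finset.Icc 1 T, ∑ i, ‖Xbar t - X t i‖ ^ 2 := by
  have hNpos : (0:ℝ) < N := by positivity
  -- row sums of W are 1
  have hWrow : ∀ i, ∑ j, W i j = 1 := by
    intro i
    have h := (hWnull (fun _ => 1)).mpr ⟨1, rfl⟩
    have h2 := congrFun h i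
    simp [Matrix.mulVec, Matrix.sub_apply, Matrix.one_apply, dotProduct,
      Finset.sum_sub_distrib] at h2
    linarith
  have hWtrow : ∀ t i, ∑ j, Wt t i j = 1 := by
    intro t i
    rw [hWt]
    dsimp only
    split
    · simp only [Matrix.add_apply, Matrix.smul_apply, smul_eq_mul, Finset.sum_add_distrib,
        ← Finset.mul_sum, hWrow i]
      simp [Matrix.one_apply]
    · simp [Matrix.one_apply]
  -- key recursion for the averages
  have key : ∀ t, Xbar (t+1) = Xbar t - α • gbar t := by
    intro t
    induction t with
    | zero =>
      have hsum1 : ∑ j, X 1 j = ∑ i, (X 0 i - α • gradient (f i) (X 0 i)) := by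
        calc ∑ j, X 1 j = ∑ j, ∑ i, Wt 0 i j •
            (2 • X 0 i - Xm1 i - α • gradient (f i) (X 0 i) + α • gradient (f i) (Xm1 i)) :=
              Finset.sum_congr rfl fun j _ => hX1 j
          _ = ∑ i, (2 • X 0 i - Xm1 i - α • gradient (f i) (X 0 i)
                + α • gradient (f i) (Xm1 i)) := avg_swap _ (hWtrow 0) _
          _ = ∑ i, (X 0 i - α • gradient (f i) (X 0 i)) := by
              refine Finset.sum_congr rfl fun i _ => ?_
              have h := hX0 i
              set p := gradient (f i) (X 0 i) with hp
              set q := gradient (f i) (Xm1 i) with hq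
              rw [h, two_nsmul]; abel
      rw [hXbar, hgbar]
      simp only
      rw [hsum1, Finset.sum_sub_distrib, ← Finset.smul_sum, smul_sub, smul_comm]
    | succ t ih =>
      have hsum1 : ∑ j, X (t+2) j = 2 • (∑ i, X (t+1) i) - (∑ i, X t i)
          - α • (∑ i, gradient (f i) (X (t+1) i)) + α • (∑ i, gradient (f i) (X t i)) := by
        calc ∑ j, X (t+2) j = ∑ j, ∑ i, Wt (t+1) i j •
            (2 • X (t+1) i - X t i - α • gradient (f i) (X (t+1) i)
              + α • gradient (f i) (X t i)) := Finset.sum_congr rfl fun j _ => hXrec t j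
          _ = ∑ i, (2 • X (t+1) i - X t i - α • gradient (f i) (X (t+1) i)
              + α • gradient (f i) (X t i)) := avg_swap _ (hWtrow (t+1)) _
          _ = _ := by
              rw [Finset.sum_add_distrib, Finset.sum_sub_distrib, Finset.sum_sub_distrib,
                ← Finset.smul_sum, ← Finset.smul_sum, ← Finset.smul_sum]
      have ih' : Xbar t = Xbar (t+1) + α • gbar t := by rw [ih]; abel
      have hX2 : Xbar (t+2) = 2 • Xbar (t+1) - Xbar t - α • gbar (t+1) + α • gbar t := by
        rw [hXbar, hgbar]
        simp only
        rw [hsum1]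
        rw [smul_add, smul_sub, smul_sub]
        rw [smul_comm ((1:ℝ)/N) (2:ℕ), smul_comm ((1:ℝ)/N) α, smul_comm ((1:ℝ)/N) α]
      rw [hX2, ih', two_nsmul]
      abel
  -- gradient of F
  have hgradFat : ∀ x, HasGradientAt F ((1/(N:ℝ)) • ∑ i, gradient (f i) x) x := by
    rw [hF]; exact fun x => grad_avg f hdiff x
  have hgradF : ∀ x, gradient F x = (1/(N:ℝ)) • ∑ i, gradient (f i) x :=
    fun x => (hgradFat x).gradient
  have hFdiff : Differentiable ℝ F := fun x => (hgradFat x).differentiableAt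
  have hFlip : LipschitzWith L.toNNReal (gradient F) := by
    have h := avg_lipschitz (by omega : 0 < N) hL.le (fun i => gradient (f i)) hsmooth
    have heq : gradient F = fun x => (1/(N:ℝ)) • ∑ i, gradient (f i) x := funext hgradF
    rw [heq]; exact h
  have hgap : ∀ t, ‖gradient F (Xbar t) - gbar t‖^2
      ≤ L^2/N * ∑ i, ‖Xbar t - X t i‖^2 := by
    intro t
    have hrw : gradient F (Xbar t) - gbar t
        = (1/(N:ℝ)) • ∑ i, (gradient (f i) (Xbar t) - gradient (f i) (X t i)) := by
      rw [hgradF, hgbar]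
      simp only
      rw [Finset.sum_sub_distrib, smul_sub]
    rw [hrw]
    exact gap_bound (by omega) hL.le _ hsmooth _ _
  -- per-step inequality
  have step : ∀ t, α/2 * (‖gradient F (Xbar t)‖^2 + (1 - L*α) * ‖gbar t‖^2)
      ≤ (F (Xbar t) - F (Xbar (t+1))) + (α/2 * (L^2/N)) * ∑ i, ‖Xbar t - X t i‖^2 := by
    intro t
    have hd := mile_descent_aux hL.le hFdiff hFlip (Xbar t) (Xbar (t+1))
    have hdy : Xbar (t+1) - Xbar t = -(α • gbar t) := by rw [key t]; abel
    rw [hdy] at hd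
    have hinner : (inner ℝ (gradient F (Xbar t)) (-(α • gbar t)) : ℝ)
        = -α * inner ℝ (gradient F (Xbar t)) (gbar t) := by
      rw [inner_neg_right, real_inner_smul_right]; ring
    have hnorm : ‖-(α • gbar t)‖^2 = α^2 * ‖gbar t‖^2 := by
      rw [norm_neg, norm_smul, Real.norm_eq_abs, abs_of_pos hα0, mul_pow]
    rw [hinner, hnorm] at hd
    have hexp : ‖gradient F (Xbar t) - gbar t‖^2
        = ‖gradient F (Xbar t)‖^2 - 2 * inner ℝ (gradient F (Xbar t)) (gbar t) + ‖gbar t‖^2 :=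
      norm_sub_sq_real _ _
    have hmul := mul_le_mul_of_nonneg_left (hgap t) (by positivity : (0:ℝ) ≤ α/2)
    have hDrw : α/2 * (L^2/N * ∑ i, ‖Xbar t - X t i‖^2)
        = (α/2 * (L^2/N)) * ∑ i, ‖Xbar t - X t i‖^2 := by ring
    rw [hDrw] at hmul
    nlinarith [hd, hexp, hmul]
  -- telescoping
  have tel : ∀ S : ℕ, 1 ≤ S → ∑ t ∈ Finset.Icc 1 S, (F (Xbar t) - F (Xbar (t+1)))
      = F (Xbar 1) - F (Xbar (S+1)) := by
    intro S hS
    induction S with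
    | zero => omega
    | succ S ih =>
      by_cases h : 1 ≤ S
      · rw [Finset.sum_Icc_succ_top (by omega : 1 ≤ S + 1), ih h]; ring
      · have hS0 : S = 0 := by omega
        subst hS0; simp
  have hsumstep : α/2 * (∑ t ∈ Finset.Icc 1 T,
        (‖gradient F (Xbar t)‖^2 + (1 - L*α) * ‖gbar t‖^2))
      ≤ (F (Xbar 1) - F xstar)
        + (α/2 * (L^2/N)) * ∑ t ∈ Finset.Icc 1 T, ∑ i, ‖Xbar t - X t i‖^2 := by
    have h1 := Finset.sum_le_sum (fun t (_ : t ∈ Finset.Icc 1 T) => step t)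
    rw [Finset.sum_add_distrib, tel T hT, ← Finset.mul_sum, ← Finset.mul_sum] at h1
    have h2 := hxstar (Xbar (T+1))
    linarith
  have hgoal := hsumstep
  rw [← sub_le_iff_le_add, div_mul_eq_mul_div 2 α (F (Xbar 1) - F xstar), le_div_iff₀ hα0]
  nlinarith [hgoal]
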